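/- arXiv:1904.02558 — 5 statements merged into one kernel-verified Lean document; each statement's English description precedes it below -/
import Mathlib

section
/- Let G be a nontrivial nonabelian simple group and let n ≥ 1. If N is a normal subgroup of the direct power G^n such that the quotient group G^n / N is isomorphic to G, then there exists an index k ∈ {0, …, n−1} such that N = {x ∈ G^n | x k = 1}, i.e. N is exactly the kernel of the k-th coordinate projection (equivalently, N = G^k × {1} × G^{n−k−1}). (This is the generalization, noted in the paper's remark, of Lemma 'lem-simple'.) -/
/-- Generalized Lemma `lem-simple`: if `G` is a nontrivial nonabelian simple group and `N` is
a normal subgroup of `G^n` (realized as `Fin n → G`) whose quotient is isomorphic to `G`,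
then `N` is the kernel of some coordinate projection. -/
theorem normal_subgroup_of_pi_quotient_iso_self
    {G : Type*} [Group G] [IsSimpleGroup G]
    (hnonab : ∃ a b : G, a * b ≠ b * a)
    (n : ℕ) (hn : 1 ≤ n)
    (N : Subgroup (Fin n → G)) [N.Normal]
    (hiso : Nonempty (((Fin n → G) ⧸ N) ≃* G)) :
    ∃ k : Fin n, N = (Pi.evalMonoidHom (fun _ : Fin n => G) k).ker := by
  obtain ⟨e⟩ := hiso
  set φ : (Fin n → G) →* G := e.toMonoidHom.comp (QuotientGroup.mk' N) with hφ
  have hker : φ.ker = N := by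
    ext x
    rw [MonoidHom.mem_ker, hφ, MonoidHom.comp_apply]
    rw [show (e.toMonoidHom ((QuotientGroup.mk' N) x) = 1) ↔
        ((QuotientGroup.mk' N) x = 1) from e.map_eq_one_iff]
    rw [QuotientGroup.mk'_apply, QuotientGroup.eq_one_iff]
  have hsurj : Function.Surjective φ :=
    e.surjective.comp (QuotientGroup.mk'_surjective N)
  obtain ⟨g₀, hg₀⟩ := exists_ne (1 : G)
  set ψ : Fin n → (G →* G) := fun i => φ.comp (MonoidHom.mulSingle (fun _ : Fin n => G) i) with hψ
  have hrangeNormal : ∀ i, (ψ i).range.Normal := by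
    intro i
    rw [hψ]
    rw [MonoidHom.range_comp]
    have hnorm : (MonoidHom.mulSingle (fun _ : Fin n => G) i).range.Normal := by
      constructor
      rintro h ⟨a, rfl⟩ y
      refine ⟨y i * a * (y i)⁻¹, ?_⟩
      ext j
      by_cases hj : j = i
      · subst hj; simp
      · simp [Pi.mulSingle, Function.update, hj]
    exact hnorm.map φ hsurj
  have hG : ∀ i, (ψ i).range = ⊥ ∨ (ψ i).range = ⊤ := fun i =>
    (hrangeNormal i).eq_bot_or_eq_top
  have hbot_triv : ∀ i, (ψ i).range = ⊥ → ψ i = 1 := by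
    intro i h
    ext a
    have : ψ i a ∈ (ψ i).range := ⟨a, rfl⟩
    rw [h, Subgroup.mem_bot] at this
    simpa using this
  -- there exists k with range ψ k = ⊤
  have hex : ∃ k, (ψ k).range = ⊤ := by
    by_contra hno
    push_neg at hno
    have htriv : ∀ i, ψ i = 1 := fun i => hbot_triv i ((hG i).resolve_right (hno i))
    obtain ⟨x, hx⟩ := hsurj g₀
    have hxN : x ∈ N := by
      apply Subgroup.pi_mem_of_mulSingle_mem
      intro i
      rw [← hker, MonoidHom.mem_ker]
      have := congrArg (fun f : G →* G => f (x i)) (htriv i)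
      simpa [hψ] using this
    rw [← hker, MonoidHom.mem_ker] at hxN
    rw [hx] at hxN
    exact hg₀ hxN
  obtain ⟨k, hk⟩ := hex
  -- all other ψ j are trivial
  have htriv : ∀ j, j ≠ k → ψ j = 1 := by
    intro j hj
    rcases hG j with h | h
    · exact hbot_triv j h
    exfalso
    obtain ⟨a, b, hab⟩ := hnonab
    obtain ⟨a', ha'⟩ : ∃ a', ψ k a' = a := MonoidHom.range_eq_top.mp hk a
    obtain ⟨b', hb'⟩ : ∃ b', ψ j b' = b := MonoidHom.range_eq_top.mp h b
    apply hab
    rw [← ha', ← hb', hψ]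
    simp only [MonoidHom.comp_apply, MonoidHom.mulSingle_apply]
    rw [← map_mul, ← map_mul]
    congr 1
    exact (Pi.mulSingle_commute (f := fun _ : Fin n => G) hj.symm a' b').eq
  -- ψ k injective
  have hinjk : Function.Injective (ψ k) := by
    rcases (ψ k).normal_ker.eq_bot_or_eq_top with h | h
    · exact (MonoidHom.ker_eq_bot_iff _).mp h
    · exfalso
      obtain ⟨a', ha'⟩ : ∃ a', ψ k a' = g₀ := MonoidHom.range_eq_top.mp hk g₀
      have : a' ∈ (ψ k).ker := h ▸ Subgroup.mem_top a'
      rw [MonoidHom.mem_ker, ha'] at this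
      exact hg₀ this
  -- ker (eval k) ≤ N
  have hle : (Pi.evalMonoidHom (fun _ : Fin n => G) k).ker ≤ N := by
    intro w hw
    rw [MonoidHom.mem_ker, Pi.evalMonoidHom_apply] at hw
    apply Subgroup.pi_mem_of_mulSingle_mem
    intro i
    by_cases hi : i = k
    · subst hi; rw [hw]; simpa using one_mem N
    · rw [← hker, MonoidHom.mem_ker]
      have := congrArg (fun f : G →* G => f (w i)) (htriv i hi)
      simpa [hψ] using this
  refine ⟨k, le_antisymm ?_ hle⟩
  intro x hx
  rw [MonoidHom.mem_ker, Pi.evalMonoidHom_apply]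
  -- mulSingle k (x k) ∈ N
  have hy : (Pi.mulSingle k (x k))⁻¹ * x ∈ N := by
    apply hle
    rw [MonoidHom.mem_ker, Pi.evalMonoidHom_apply]
    simp
  have hsing : Pi.mulSingle k (x k) ∈ N := by
    have := mul_mem hx (inv_mem hy)
    simpa [mul_assoc] using this
  rw [← hker, MonoidHom.mem_ker] at hsing
  apply hinjk
  rw [map_one]
  rw [hψ]
  simpa using hsing
end

section
/- Let G be a nonabelian simple group, n ≥ 1, and let N be a normal subgroup of the direct power G^n whose projection to the k-th coordinate is surjective, i.e. p_k(N) = G. Then N contains the k-th factor of G^n: for every g ∈ G, the element of G^n whose k-th coordinate is g and whose other coordinates are the identity belongs to N. -/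
open scoped commutatorElement

/-- If a normal subgroup `N` of `G^n` (with `G` nonabelian simple) projects onto the `k`-th
factor, then `N` contains the whole `k`-th factor. -/
theorem normal_subgroup_pi_contains_factor_of_surjective_projection
    {G : Type*} [Group G] [IsSimpleGroup G]
    (hnonab : ∃ a b : G, a * b ≠ b * a)
    (n : ℕ) (hn : 1 ≤ n) (k : Fin n)
    (N : Subgroup (Fin n → G)) [N.Normal]
    (hsurj : N.map (Pi.evalMonoidHom (fun _ : Fin n => G) k) = ⊤) :
    ∀ g : G, Pi.mulSingle k g ∈ N := by
  classical
  have hNnorm : N.Normal := inferInstance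
  set f : G →* (Fin n → G) := MonoidHom.mulSingle (fun _ : Fin n => G) k with hf
  set H : Subgroup G := N.comap f with hH
  have hHnormal : H.Normal := by
    constructor
    intro h hh g
    show f (g * h * g⁻¹) ∈ N
    have : f (g * h * g⁻¹) = f g * f h * (f g)⁻¹ := by
      simp [map_mul]
    rw [this]
    have := hNnorm.conj_mem (f h) hh (f g)
    simpa [mul_assoc] using this
  have hne : H ≠ ⊥ := by
    obtain ⟨a, b, hab⟩ := hnonab
    have ha : a ∈ N.map (Pi.evalMonoidHom (fun _ : Fin n => G) k) := by
      rw [hsurj]; trivial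
    obtain ⟨x, hxN, hxk⟩ := ha
    simp only [Pi.evalMonoidHom_apply] at hxk
    have hmem : ⁅a, b⁆ ∈ H := by
      show f ⁅a, b⁆ ∈ N
      have key : f ⁅a, b⁆ = ⁅x, f b⁆ := by
        funext j
        by_cases hj : j = k
        · subst hj
          simp [hf, commutatorElement_def, Pi.mulSingle, hxk]
        · simp [hf, commutatorElement_def, MonoidHom.mulSingle_apply, Pi.mulSingle_apply, hj]
      rw [key, commutatorElement_def]
      have h1 : f b * x⁻¹ * (f b)⁻¹ ∈ N := hNnorm.conj_mem x⁻¹ (inv_mem hxN) (f b)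
      have := N.mul_mem hxN h1
      simpa [mul_assoc] using this
    intro hbot
    rw [hbot] at hmem
    have : ⁅a, b⁆ = 1 := hmem
    rw [commutatorElement_eq_one_iff_mul_comm] at this
    exact hab this
  have htop : H = ⊤ := by
    rcases hHnormal.eq_bot_or_eq_top with h | h
    · exact absurd h hne
    · exact h
  intro g
  have : g ∈ H := htop ▸ Subgroup.mem_top g
  exact this
end

section
/- Let G be a nonabelian simple group and n ≥ 1. Then every normal subgroup N of the direct power G^n is a sub-product of factors: there exists a set s of indices in {0, …, n−1} such that N = {x ∈ G^n | x i = 1 for all i ∈ s}. (This is the classification of normal subgroups of G^n established in the course of the proof of Lemma 'lem-simple'.) -/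
/-- Classification of normal subgroups of `G^n` for `G` nonabelian simple: every normal
subgroup is the set of tuples vanishing on a given set of coordinates. -/
theorem normal_subgroup_pi_eq_subproduct
    {G : Type*} [Group G] [IsSimpleGroup G]
    (hnonab : ∃ a b : G, a * b ≠ b * a)
    (n : ℕ) (hn : 1 ≤ n)
    (N : Subgroup (Fin n → G)) [N.Normal] :
    ∃ s : Set (Fin n), ∀ x : Fin n → G, x ∈ N ↔ ∀ i ∈ s, x i = 1 := by
  classical
  have hNn : N.Normal := inferInstance
  have hcenter : Subgroup.center G = ⊥ := by
    rcases (Subgroup.center G).normal_of_characteristic.eq_bot_or_eq_top with h | h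
    · exact h
    · exfalso
      obtain ⟨a, b, hab⟩ := hnonab
      have ha : a ∈ Subgroup.center G := h ▸ Subgroup.mem_top a
      exact hab (Subgroup.mem_center_iff.mp ha b).symm
  have key : ∀ i : Fin n, (∃ y ∈ N, y i ≠ 1) → ∀ g : G, Pi.mulSingle i g ∈ N := by
    rintro i ⟨y, hyN, hyi⟩ g
    set K : Subgroup G := N.comap (MonoidHom.mulSingle (fun _ : Fin n => G) i) with hK
    have hKnormal : K.Normal := by
      constructor
      intro a ha b
      simp only [hK, Subgroup.mem_comap, map_mul, map_inv] at ha ⊢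
      exact hNn.conj_mem _ ha _
    -- find g0 not commuting with y i
    obtain ⟨g0, hg0⟩ : ∃ g0 : G, g0 * y i ≠ y i * g0 := by
      by_contra h
      push_neg at h
      have : y i ∈ Subgroup.center G := Subgroup.mem_center_iff.mpr h
      rw [hcenter, Subgroup.mem_bot] at this
      exact hyi this
    set c : G := g0 * y i * g0⁻¹ * (y i)⁻¹ with hc
    have hcne : c ≠ 1 := by
      intro h
      apply hg0
      have := mul_eq_one_iff_eq_inv.mp h
      rw [hc] at h
      group at h
      -- derive commutation
      have h' : g0 * y i * g0⁻¹ = y i := by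
        have := congrArg (· * y i) h
        simpa [mul_assoc] using this
      calc g0 * y i = (g0 * y i * g0⁻¹) * g0 := by group
        _ = y i * g0 := by rw [h']
    have hcK : c ∈ K := by
      have hconj : Pi.mulSingle i g0 * y * (Pi.mulSingle i g0)⁻¹ * y⁻¹ ∈ N := by
        exact N.mul_mem (hNn.conj_mem _ hyN _) (N.inv_mem hyN)
      have heq : Pi.mulSingle i c = Pi.mulSingle i g0 * y * (Pi.mulSingle i g0)⁻¹ * y⁻¹ := by
        funext j
        by_cases hj : j = i
        · subst hj
          simp [hc]
        · simp [Pi.mulSingle_apply, hj]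
      simp only [hK, Subgroup.mem_comap]
      show Pi.mulSingle i c ∈ N
      rw [heq]
      exact hconj
    have hKne : K ≠ ⊥ := by
      intro h
      rw [h, Subgroup.mem_bot] at hcK
      exact hcne hcK
    have hKtop : K = ⊤ := (hKnormal.eq_bot_or_eq_top).resolve_left hKne
    have : g ∈ K := hKtop ▸ Subgroup.mem_top g
    simpa [hK, Subgroup.mem_comap] using this
  refine ⟨{i | ∀ y ∈ N, y i = 1}, fun x => ⟨fun hx i hi => hi x hx, fun hx => ?_⟩⟩
  rw [← Finset.noncommProd_mulSingle x]
  apply Subgroup.noncommProd_mem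
  intro i _
  by_cases hi : ∀ y ∈ N, y i = 1
  · have : x i = 1 := hx i hi
    rw [this]
    simpa using N.one_mem
  · push_neg at hi
    exact key i hi (x i)
end

section
/- Let G be a nontrivial simple group, n ≥ 2, and let N be a normal subgroup of the direct power G^n. If there exist two distinct indices i ≠ j such that the projection of N to the i-th coordinate and the projection of N to the j-th coordinate are both trivial, then the quotient G^n / N is not isomorphic to G. (This is the step in the proof of Lemma 'lem-simple' showing that at most one coordinate projection of N can be trivial.) -/
lemma not_isSimpleGroup_prod {G : Type*} [Group G] [Nontrivial G] :
    ¬ IsSimpleGroup (G × G) := by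
  intro h
  obtain ⟨g, hg⟩ := exists_ne (1 : G)
  have hnorm : ((⊥ : Subgroup G).prod (⊤ : Subgroup G)).Normal := inferInstance
  rcases h.eq_bot_or_eq_top_of_normal _ hnorm with hb | ht
  · have : ((1 : G), g) ∈ (⊥ : Subgroup G).prod ⊤ := ⟨rfl, trivial⟩
    rw [hb] at this
    exact hg (congrArg Prod.snd this)
  · have : (g, (1 : G)) ∈ (⊥ : Subgroup G).prod ⊤ := ht ▸ trivial
    exact hg this.1

/-- If a normal subgroup `N` of `G^n` (with `G` nontrivial simple, `n ≥ 2`) has trivial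
projection to two distinct coordinates, then `G^n / N` is not isomorphic to `G`. -/
theorem quotient_not_iso_of_two_trivial_projections
    {G : Type*} [Group G] [IsSimpleGroup G]
    (n : ℕ) (hn : 2 ≤ n)
    (N : Subgroup (Fin n → G)) [N.Normal]
    (i j : Fin n) (hij : i ≠ j)
    (hi : N.map (Pi.evalMonoidHom (fun _ : Fin n => G) i) = ⊥)
    (hj : N.map (Pi.evalMonoidHom (fun _ : Fin n => G) j) = ⊥) :
    ¬ Nonempty (((Fin n → G) ⧸ N) ≃* G) := by
  rintro ⟨e⟩
  -- the map to G × G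
  set ψ : (Fin n → G) →* G × G :=
    (Pi.evalMonoidHom (fun _ : Fin n => G) i).prod
      (Pi.evalMonoidHom (fun _ : Fin n => G) j) with hψ
  have hNker : N ≤ ψ.ker := by
    intro x hx
    have hxi : x i = 1 := by
      have : x i ∈ N.map (Pi.evalMonoidHom (fun _ : Fin n => G) i) :=
        ⟨x, hx, rfl⟩
      simpa [hi] using this
    have hxj : x j = 1 := by
      have : x j ∈ N.map (Pi.evalMonoidHom (fun _ : Fin n => G) j) :=
        ⟨x, hx, rfl⟩
      simpa [hj] using this
    simp [hψ, MonoidHom.mem_ker, Prod.ext_iff, MonoidHom.prod_apply, hxi, hxj]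
  have hψsurj : Function.Surjective ψ := by
    rintro ⟨a, b⟩
    refine ⟨fun k => if k = i then a else if k = j then b else 1, ?_⟩
    simp [hψ, MonoidHom.prod_apply, Pi.evalMonoidHom, hij, hij.symm]
  -- lift to the quotient
  let φ : ((Fin n → G) ⧸ N) →* G × G := QuotientGroup.lift N ψ hNker
  have hφsurj : Function.Surjective φ := by
    intro y
    obtain ⟨x, hx⟩ := hψsurj y
    exact ⟨QuotientGroup.mk x, hx⟩
  -- the composite G →* G × G is surjective
  let f : G →* G × G := φ.comp e.symm.toMonoidHom
  have hfsurj : Function.Surjective f :=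
    hφsurj.comp e.symm.surjective
  have : Nontrivial (G × G) := inferInstance
  exact not_isSimpleGroup_prod (IsSimpleGroup.isSimpleGroup_of_surjective f hfsurj)
end

section
/- Let X be a measurable space, f : X → X a measurable map, and let μ and ν be two distinct probability measures on X, each of which is invariant and ergodic for f. Then μ and ν are mutually singular. -/
open MeasureTheory Filter Set
open scoped ENNReal

/-- If `g > 1` on a measurable set `E` of finite measure and `∫⁻_E g = ν E`,
then `ν E = 0`. -/
lemma aux_lintegral_eq_measure {X : Type*} [MeasurableSpace X] (ν : Measure X)
    [IsFiniteMeasure ν] {g : X → ℝ≥0∞} (hg : Measurable g) {E : Set X}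
    (hE : MeasurableSet E) (hgt : ∀ x ∈ E, 1 < g x)
    (heq : ∫⁻ x in E, g x ∂ν = ν E) : ν E = 0 := by
  have h1 : ∫⁻ _ in E, (1 : ℝ≥0∞) ∂ν = ν E := by simp
  have hle : (fun _ => (1 : ℝ≥0∞)) ≤ᵐ[ν.restrict E] g := by
    filter_upwards [ae_restrict_mem hE] with x hx
    exact (hgt x hx).le
  have hfin : ∫⁻ _ in E, (1 : ℝ≥0∞) ∂ν ≠ ∞ := by
    rw [h1]; exact (measure_lt_top ν E).ne
  have hsub : ∫⁻ x in E, (g x - 1) ∂ν = 0 := by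
    rw [lintegral_sub measurable_const hfin hle, heq, h1, tsub_self]
  have hzero : (fun x => g x - 1) =ᵐ[ν.restrict E] 0 :=
    (lintegral_eq_zero_iff (hg.sub measurable_const)).mp hsub
  have hFalse : ∀ᵐ x ∂ν.restrict E, False := by
    filter_upwards [hzero, ae_restrict_mem hE] with x hx hxE
    exact absurd (tsub_eq_zero_iff_le.mp hx) (not_le.mpr (hgt x hxE))
  have hbot : ν.restrict E = 0 := by
    have h := eventually_false_iff_eq_bot.mp hFalse
    rwa [ae_eq_bot] at h
  calc ν E = ν.restrict E E := (Measure.restrict_apply_self ν E).symm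
    _ = 0 := by rw [hbot]; rfl

/-- An invariant probability measure absolutely continuous with respect to an ergodic
invariant probability measure equals it. -/
lemma aux_eq_of_ac {X : Type*} [MeasurableSpace X] {f : X → X} (hf : Measurable f)
    {μ ν : Measure X} [IsProbabilityMeasure μ] [IsProbabilityMeasure ν]
    (hμ : MeasurePreserving f μ μ) (hν : Ergodic f ν) (hac : μ ≪ ν) : μ = ν := by
  set g := μ.rnDeriv ν with hgdef
  have hg : Measurable g := Measure.measurable_rnDeriv μ ν
  have hμg : ν.withDensity g = μ := Measure.withDensity_rnDeriv_eq μ ν hac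
  set A : Set X := {x | 1 < g x} with hAdef
  have hAmeas : MeasurableSet A := measurableSet_lt measurable_const hg
  set B : Set X := f ⁻¹' A with hBdef
  have hBmeas : MeasurableSet B := hf hAmeas
  -- equal measures of A and its preimage
  have hνAB : ν B = ν A := hν.toMeasurePreserving.measure_preimage hAmeas.nullMeasurableSet
  have hμAB : μ B = μ A := hμ.measure_preimage hAmeas.nullMeasurableSet
  -- symmetric-difference pieces have equal measures
  have hν_diff : ν (A \ B) = ν (B \ A) := by
    have h1 : ν (A ∩ B) + ν (A \ B) = ν A := measure_inter_add_diff A hBmeas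
    have h2 : ν (B ∩ A) + ν (B \ A) = ν B := measure_inter_add_diff B hAmeas
    rw [Set.inter_comm B A] at h2
    rw [hνAB, ← h1] at h2
    exact (ENNReal.add_right_inj (measure_lt_top ν _).ne).mp h2.symm
  have hμ_diff : μ (A \ B) = μ (B \ A) := by
    have h1 : μ (A ∩ B) + μ (A \ B) = μ A := measure_inter_add_diff A hBmeas
    have h2 : μ (B ∩ A) + μ (B \ A) = μ B := measure_inter_add_diff B hAmeas
    rw [Set.inter_comm B A] at h2
    rw [hμAB, ← h1] at h2
    exact (ENNReal.add_right_inj (measure_lt_top μ _).ne).mp h2.symm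
  -- μ of a measurable set is the integral of g
  have hμ_int : ∀ s : Set X, MeasurableSet s → μ s = ∫⁻ x in s, g x ∂ν := by
    intro s hs
    rw [← hμg, withDensity_apply _ hs]
  -- ν (A \ B) ≤ μ (A \ B)
  have hb1 : ν (A \ B) ≤ μ (A \ B) := by
    rw [hμ_int _ (hAmeas.diff hBmeas)]
    calc ν (A \ B) = ∫⁻ _ in A \ B, (1 : ℝ≥0∞) ∂ν := by simp
      _ ≤ ∫⁻ x in A \ B, g x ∂ν :=
        setLIntegral_mono hg fun x hx => le_of_lt hx.1
  -- μ (B \ A) ≤ ν (B \ A)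
  have hb2 : μ (B \ A) ≤ ν (B \ A) := by
    rw [hμ_int _ (hBmeas.diff hAmeas)]
    calc ∫⁻ x in B \ A, g x ∂ν ≤ ∫⁻ _ in B \ A, (1 : ℝ≥0∞) ∂ν :=
        setLIntegral_mono measurable_const fun x hx => not_lt.mp hx.2
      _ = ν (B \ A) := by simp
  -- therefore all equal, and strictness kills the measure of A \ B
  have hchain : ν (A \ B) = μ (A \ B) :=
    le_antisymm hb1 (by rw [hμ_diff]; exact hb2.trans_eq hν_diff.symm)
  have hAB0 : ν (A \ B) = 0 := by
    apply aux_lintegral_eq_measure ν hg (hAmeas.diff hBmeas)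
      (fun x hx => hx.1)
    rw [← hμ_int _ (hAmeas.diff hBmeas), ← hchain]
  have hBA0 : ν (B \ A) = 0 := hν_diff ▸ hAB0
  -- A is a.e. invariant, so by ergodicity its measure is 0 or 1
  have hAinv : f ⁻¹' A =ᵐ[ν] A := by
    rw [MeasureTheory.ae_eq_set]
    exact ⟨hBA0, hAB0⟩
  rcases hν.quasiErgodic.ae_empty_or_univ₀ hAmeas.nullMeasurableSet hAinv with hA | hA
  · -- ν A = 0 : then g ≤ 1 a.e., hence g = 1 a.e., hence μ = ν
    have hνA : ν A = 0 := ae_eq_empty.mp hA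
    have hle : g ≤ᵐ[ν] 1 := by
      rw [Filter.EventuallyLE, ae_iff]
      have : {x | ¬ g x ≤ (1 : X → ℝ≥0∞) x} = A := by
        ext x; simp [hAdef, not_le]
      rwa [this]
    have hint : ∫⁻ x, g x ∂ν = 1 := by
      have : μ Set.univ = ∫⁻ x in Set.univ, g x ∂ν := hμ_int _ MeasurableSet.univ
      rw [measure_univ] at this
      rw [setLIntegral_univ] at this
      exact this.symm
    have hsub : ∫⁻ x, ((1 : ℝ≥0∞) - g x) ∂ν = 0 := by
      have h := lintegral_sub hg (by rw [hint]; exact ENNReal.one_ne_top) hle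
      simpa [hint] using h
    have hge : ∀ᵐ x ∂ν, (1 : ℝ≥0∞) - g x = 0 :=
      (lintegral_eq_zero_iff (measurable_const.sub hg)).mp hsub
    have hgeq : g =ᵐ[ν] 1 := by
      filter_upwards [hge, hle] with x h1x h2x
      exact le_antisymm h2x (tsub_eq_zero_iff_le.mp h1x)
    calc μ = ν.withDensity g := hμg.symm
      _ = ν.withDensity 1 := withDensity_congr_ae hgeq
      _ = ν := by simp
  · -- ν A = 1 : contradiction via strictness
    exfalso
    have hνA : ν Aᶜ = 0 := ae_eq_univ.mp hA
    have hμA : μ Aᶜ = 0 := hac hνA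
    have hνA1 : ν A = 1 := by
      have := measure_add_measure_compl hAmeas (μ := ν)
      rw [hνA, add_zero] at this; rw [this, measure_univ]
    have hμA1 : μ A = 1 := by
      have := measure_add_measure_compl hAmeas (μ := μ)
      rw [hμA, add_zero] at this; rw [this, measure_univ]
    have : ν A = 0 := by
      apply aux_lintegral_eq_measure ν hg hAmeas (fun x hx => hx)
      rw [← hμ_int _ hAmeas, hμA1, hνA1]
    rw [this] at hνA1
    exact zero_ne_one hνA1

/-- Two distinct ergodic invariant probability measures for a measurable map are
mutually singular. -/
theorem ergodic_distinct_mutuallySingular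
    {X : Type*} [MeasurableSpace X] (f : X → X) (hf : Measurable f)
    (μ ν : Measure X) [IsProbabilityMeasure μ] [IsProbabilityMeasure ν]
    (hμ : Ergodic f μ) (hν : Ergodic f ν) (hne : μ ≠ ν) :
    μ ⟂ₘ ν := by
  by_cases hac : μ ≪ ν
  · exact absurd (aux_eq_of_ac hf hμ.toMeasurePreserving hν hac) hne
  · -- there is a measurable set A with ν A = 0 < μ A
    have hex : ∃ s, ν s = 0 ∧ μ s ≠ 0 := by
      by_contra h
      push_neg at h
      exact hac (Measure.AbsolutelyContinuous.mk fun s _ hs => h s hs)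
    obtain ⟨A₀, hνA₀, hμA₀⟩ := hex
    set A : Set X := toMeasurable ν A₀ with hAdef
    have hAmeas : MeasurableSet A := measurableSet_toMeasurable ν A₀
    have hνA : ν A = 0 := by rw [measure_toMeasurable]; exact hνA₀
    have hμA : μ A ≠ 0 := fun h =>
      hμA₀ (measure_mono_null (subset_toMeasurable ν A₀) h)
    -- the set of points visiting A infinitely often
    set J : Set X := {x | ∃ᶠ n in atTop, f^[n] x ∈ A} with hJdef
    have hJ_eq : J = ⋂ n, ⋃ m, ⋃ _ : n ≤ m, f^[m] ⁻¹' A := by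
      ext x
      simp [hJdef, frequently_atTop, Set.mem_iInter, Set.mem_iUnion]
    have hJmeas : MeasurableSet J := by
      rw [hJ_eq]
      exact MeasurableSet.iInter fun n => MeasurableSet.iUnion fun m =>
        MeasurableSet.iUnion fun _ => (hf.iterate m) hAmeas
    have hJinv : f ⁻¹' J = J := by
      ext x
      simp only [Set.mem_preimage, hJdef, Set.mem_setOf_eq, frequently_atTop]
      constructor
      · intro h n
        obtain ⟨m, hm, hmem⟩ := h n
        exact ⟨m + 1, le_trans hm (Nat.le_succ m),
          by rwa [Function.iterate_succ_apply]⟩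
      · intro h n
        obtain ⟨m, hm, hmem⟩ := h (n + 1)
        obtain ⟨k, rfl⟩ : ∃ k, m = k + 1 := ⟨m - 1, by omega⟩
        exact ⟨k, by omega, by rwa [Function.iterate_succ_apply] at hmem⟩
    -- ν J = 0
    have hνJ : ν J = 0 := by
      have hsub : J ⊆ ⋃ m, f^[m] ⁻¹' A := by
        rw [hJ_eq]
        intro x hx
        have h0 := Set.mem_iInter.mp hx 0
        simpa using h0
      refine measure_mono_null hsub (measure_iUnion_null fun m => ?_)
      rw [(hν.toMeasurePreserving.iterate m).measure_preimage
        hAmeas.nullMeasurableSet]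
      exact hνA
    -- μ J = 1 by Poincaré recurrence and ergodicity
    have hrec : ∀ᵐ x ∂μ, x ∈ A → x ∈ J :=
      hμ.toMeasurePreserving.conservative.ae_mem_imp_frequently_image_mem
        hAmeas.nullMeasurableSet
    have hdiff : μ (A \ J) = 0 := by
      rw [ae_iff] at hrec
      refine measure_mono_null ?_ hrec
      intro x hx
      simp only [Set.mem_setOf_eq, Classical.not_imp]
      exact ⟨hx.1, hx.2⟩
    have hμJ_pos : μ J ≠ 0 := by
      intro h
      apply hμA
      have : μ A ≤ μ (A \ J) + μ J := by
        refine le_trans (measure_mono ?_) (measure_union_le _ _)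
        intro x hx
        by_cases hxJ : x ∈ J
        · exact Or.inr hxJ
        · exact Or.inl ⟨hx, hxJ⟩
      rw [hdiff, h, add_zero] at this
      exact le_antisymm this zero_le
    rcases hμ.ae_empty_or_univ hJmeas hJinv with hJ | hJ
    · exact absurd (ae_eq_empty.mp hJ) hμJ_pos
    · refine ⟨Jᶜ, hJmeas.compl, ae_eq_univ.mp hJ, ?_⟩
      rwa [compl_compl]
end
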